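/- Let 0 < α < 1 and let u ∈ L^p((a,b)) with left weak fractional derivative D^α u ∈ L^p((a,b)) for some 1 ≤ p < ∞, and suppose the constant c^{1-α} in the fundamental theorem representation u = c^{1-α}(x-a)^{α-1} + I^α(D^α u) vanishes. Then ‖u‖_{L^p((a,b))} ≤ ((b-a)^α/Γ(α+1)) ‖D^α u‖_{L^p((a,b))}. -/

import Mathlib

open MeasureTheory Real Set Filter Topology
open scoped ENNReal

/-- Left Riemann–Liouville fractional integral of order `α` on `(a, ·)`. -/
noncomputable def leftRLInt (α a : ℝ) (u : ℝ → ℝ) (x : ℝ) : ℝ :=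
  (1 / Real.Gamma α) * ∫ y in a..x, u y * (x - y) ^ (α - 1)

/-- Left Riemann–Liouville fractional derivative of order `α` on `(a, ·)`. -/
noncomputable def leftRLDeriv (α a : ℝ) (u : ℝ → ℝ) (x : ℝ) : ℝ :=
  (1 / Real.Gamma (1 - α)) * deriv (fun z => ∫ y in a..z, u y * (z - y) ^ (-α)) x

/-- Right Riemann–Liouville fractional derivative of order `α` on `ℝ`. -/
noncomputable def rightRLDerivR (α : ℝ) (φ : ℝ → ℝ) (x : ℝ) : ℝ :=
  -(1 / Real.Gamma (1 - α)) * deriv (fun z => ∫ y in Set.Ioi z, φ y * (y - z) ^ (-α)) x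

/-- Left Riemann–Liouville fractional derivative of order `α` on `ℝ` (lower limit `-∞`). -/
noncomputable def leftRLDerivR (α : ℝ) (φ : ℝ → ℝ) (x : ℝ) : ℝ :=
  (1 / Real.Gamma (1 - α)) * deriv (fun z => ∫ y in Set.Iio z, φ y * (z - y) ^ (-α)) x

/-- `v` is the left weak fractional derivative of order `α` of `u` on `Ω`:
`∫ v φ = ∫ u D₊^α φ` for all test functions `φ` compactly supported in `Ω`. -/
def IsLeftWeakFracDerivOn (α : ℝ) (Ω : Set ℝ) (u v : ℝ → ℝ) : Prop :=
  ∀ φ : ℝ → ℝ, ContDiff ℝ (⊤ : ℕ∞) φ → HasCompactSupport φ → tsupport φ ⊆ Ω →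
    ∫ x in Ω, v x * φ x = ∫ x in Ω, u x * rightRLDerivR α φ x

lemma kint_fwd (α : ℝ) (hα : 0 < α) (c T : ℝ) (hT : 0 ≤ T) :
    ∫⁻ t in Set.Ioc c (c + T), ENNReal.ofReal ((t - c) ^ (α - 1)) ∂(volume) =
      ENNReal.ofReal (T ^ α / α) := by
  have hint : IntervalIntegrable (fun t : ℝ => (t - c) ^ (α - 1)) volume c (c + T) := by
    have := (intervalIntegral.intervalIntegrable_rpow' (by linarith : (-1:ℝ) < α - 1)
      (a := 0) (b := T)).comp_sub_right c
    simpa [zero_add, add_comm] using this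
  have hIoc : IntegrableOn (fun t : ℝ => (t - c) ^ (α - 1)) (Set.Ioc c (c + T)) volume :=
    (intervalIntegrable_iff_integrableOn_Ioc_of_le (by linarith)).mp hint
  rw [← MeasureTheory.ofReal_integral_eq_lintegral_ofReal hIoc]
  · congr 1
    rw [← intervalIntegral.integral_of_le (by linarith : c ≤ c + T)]
    rw [intervalIntegral.integral_comp_sub_right (fun t => t ^ (α - 1)) c]
    simp only [sub_self, add_sub_cancel_left]
    rw [integral_rpow (Or.inl (by linarith : (-1:ℝ) < α - 1))]
    rw [Real.zero_rpow (by linarith : α - 1 + 1 ≠ 0)]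
    ring_nf
  · exact (ae_restrict_iff' measurableSet_Ioc).2 (Filter.Eventually.of_forall
      fun t ht => Real.rpow_nonneg (sub_nonneg.2 ht.1.le) _)

lemma kint_rev (α : ℝ) (hα : 0 < α) (c T : ℝ) (hT : 0 ≤ T) :
    ∫⁻ t in Set.Ioc (c - T) c, ENNReal.ofReal ((c - t) ^ (α - 1)) ∂(volume) =
      ENNReal.ofReal (T ^ α / α) := by
  have hint : IntervalIntegrable (fun t : ℝ => (c - t) ^ (α - 1)) volume (c - T) c := by
    have := (intervalIntegral.intervalIntegrable_rpow' (by linarith : (-1:ℝ) < α - 1)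
      (a := 0) (b := T)).comp_sub_left c
    simpa [sub_zero] using this.symm
  have hIoc : IntegrableOn (fun t : ℝ => (c - t) ^ (α - 1)) (Set.Ioc (c - T) c) volume :=
    (intervalIntegrable_iff_integrableOn_Ioc_of_le (by linarith)).mp hint
  rw [← MeasureTheory.ofReal_integral_eq_lintegral_ofReal hIoc]
  · congr 1
    rw [← intervalIntegral.integral_of_le (by linarith : c - T ≤ c)]
    rw [intervalIntegral.integral_comp_sub_left (fun t => t ^ (α - 1)) c]
    simp only [sub_self, sub_sub_cancel]
    rw [integral_rpow (Or.inl (by linarith : (-1:ℝ) < α - 1))]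
    rw [Real.zero_rpow (by linarith : α - 1 + 1 ≠ 0)]
    ring_nf
  · exact (ae_restrict_iff' measurableSet_Ioc).2 (Filter.Eventually.of_forall
      fun t ht => Real.rpow_nonneg (sub_nonneg.2 ht.2) _)


/-- If `u ∈ L^p((a,b))` has left weak fractional derivative `v ∈ L^p((a,b))`
and the kernel constant vanishes, i.e. `u = I^α v` a.e. on `(a,b)`, then
`‖u‖_{L^p} ≤ ((b-a)^α / Γ(α+1)) ‖v‖_{L^p}`. -/
theorem stmt18 (α p a b : ℝ) (hα : 0 < α) (hα1 : α < 1) (hp : 1 ≤ p) (hab : a < b)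
    (u v : ℝ → ℝ)
    (hup : MemLp u (ENNReal.ofReal p) (volume.restrict (Set.Ioo a b)))
    (hwd : IsLeftWeakFracDerivOn α (Set.Ioo a b) u v)
    (hvp : MemLp v (ENNReal.ofReal p) (volume.restrict (Set.Ioo a b)))
    (hrep : u =ᵐ[volume.restrict (Set.Ioo a b)] leftRLInt α a v) :
    eLpNorm u (ENNReal.ofReal p) (volume.restrict (Set.Ioo a b))
      ≤ ENNReal.ofReal ((b - a) ^ α / Real.Gamma (α + 1)) *
        eLpNorm v (ENNReal.ofReal p) (volume.restrict (Set.Ioo a b)) := by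
  
  have hΓ : 0 < Real.Gamma α := Real.Gamma_pos_of_pos hα
  have hα1' : α - 1 ≠ 0 := by linarith
  have hp0 : 0 < p := by linarith
  have hba : (0:ℝ) ≤ b - a := by linarith
  set I : Set ℝ := Set.Ioo a b with hI
  set c1 : ℝ≥0∞ := ENNReal.ofReal (1 / Real.Gamma α) with hc1
  set C : ℝ := (b - a) ^ α / α with hCdef
  have hC0 : 0 < C := by
    have : (0:ℝ) < (b - a) ^ α := Real.rpow_pos_of_pos (by linarith) α
    positivity
  set Kc : ℝ≥0∞ := ENNReal.ofReal C with hKcdef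
  have hKc_ne_top : Kc ≠ ∞ := ENNReal.ofReal_ne_top
  have hKc_ne_zero : Kc ≠ 0 := by
    simp [hKcdef, ENNReal.ofReal_eq_zero, not_le, hC0]
  set k : ℝ → ℝ≥0∞ := fun t => if 0 < t then ENNReal.ofReal (t ^ (α - 1)) else 0 with hk
  have hk_meas : Measurable k := by
    have h1 : Measurable (fun t : ℝ => ENNReal.ofReal (t ^ (α - 1))) := by fun_prop
    exact Measurable.ite (measurableSet_lt measurable_const measurable_id) h1 measurable_const
  have hvm : AEMeasurable v (volume.restrict I) := hvp.aestronglyMeasurable.aemeasurable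
  set v' : ℝ → ℝ := hvm.mk v with hv'
  have hv'm : Measurable v' := hvm.measurable_mk
  have hvv' : v =ᵐ[volume.restrict I] v' := hvm.ae_eq_mk
  set N : ℝ → ℝ≥0∞ := fun r => (‖r‖₊ : ℝ≥0∞) with hN
  -- kernel bounds
  have kerI : ∀ x ∈ Set.Icc a b, (∫⁻ y in I, k (x - y) ∂volume) ≤ Kc := by
    intro x hx
    have hkind : ∀ y : ℝ, k (x - y) =
        (Set.Iio x).indicator (fun y => ENNReal.ofReal ((x - y) ^ (α - 1))) y := by
      intro y
      by_cases h : y < x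
      · have h1 : (0:ℝ) < x - y := sub_pos.2 h
        simp [hk, Set.indicator, h, h1]
      · have h1 : ¬ (0:ℝ) < x - y := fun h' => h (sub_pos.1 h')
        simp [hk, Set.indicator, h, h1]
    calc ∫⁻ y in I, k (x - y) ∂volume
        = ∫⁻ y in I, (Set.Iio x).indicator (fun y => ENNReal.ofReal ((x - y) ^ (α - 1))) y
            ∂volume := lintegral_congr fun y => hkind y
      _ = ∫⁻ y in Set.Iio x ∩ I, ENNReal.ofReal ((x - y) ^ (α - 1)) ∂volume := by
          rw [lintegral_indicator measurableSet_Iio,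
            Measure.restrict_restrict measurableSet_Iio]
      _ ≤ ∫⁻ y in Set.Ioc (x - (b - a)) x, ENNReal.ofReal ((x - y) ^ (α - 1)) ∂volume := by
          refine lintegral_mono_set fun y hy => ?_
          obtain ⟨hy1, hy2, hy3⟩ := hy
          exact ⟨by simp only [Set.mem_Iio] at hy1; linarith [hx.2, hy2], le_of_lt hy1⟩
      _ = Kc := kint_rev α hα x (b - a) hba
  have kerI2 : ∀ y ∈ Set.Icc a b, (∫⁻ x in I, k (x - y) ∂volume) ≤ Kc := by
    intro y hy
    have hkind : ∀ x : ℝ, k (x - y) =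
        (Set.Ioi y).indicator (fun x => ENNReal.ofReal ((x - y) ^ (α - 1))) x := by
      intro x
      by_cases h : y < x
      · have h1 : (0:ℝ) < x - y := sub_pos.2 h
        simp [hk, Set.indicator, h, h1]
      · have h1 : ¬ (0:ℝ) < x - y := fun h' => h (sub_pos.1 h')
        simp [hk, Set.indicator, h, h1]
    calc ∫⁻ x in I, k (x - y) ∂volume
        = ∫⁻ x in I, (Set.Ioi y).indicator (fun x => ENNReal.ofReal ((x - y) ^ (α - 1))) x
            ∂volume := lintegral_congr fun x => hkind x
      _ = ∫⁻ x in Set.Ioi y ∩ I, ENNReal.ofReal ((x - y) ^ (α - 1)) ∂volume := by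
          rw [lintegral_indicator measurableSet_Ioi,
            Measure.restrict_restrict measurableSet_Ioi]
      _ ≤ ∫⁻ x in Set.Ioc y (y + (b - a)), ENNReal.ofReal ((x - y) ^ (α - 1)) ∂volume := by
          refine lintegral_mono_set fun x hx => ?_
          obtain ⟨hx1, hx2, hx3⟩ := hx
          exact ⟨hx1, by linarith [hy.1, hx3]⟩
      _ = Kc := kint_fwd α hα y (b - a) hba
  -- pointwise bound
  have ptw : ∀ x ∈ I, N (leftRLInt α a v x) ≤ c1 * ∫⁻ y in I, k (x - y) * N (v' y) ∂volume := by
    intro x hx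
    obtain ⟨hax, hxb⟩ := hx
    have hIoc_sub : Set.Ioc a x ⊆ I := fun y hy => ⟨hy.1, lt_of_le_of_lt hy.2 hxb⟩
    have step1 : N (leftRLInt α a v x)
        = c1 * N (∫ y in a..x, v y * (x - y) ^ (α - 1)) := by
      simp only [hN, leftRLInt, nnnorm_mul, ENNReal.coe_mul]
      congr 1
      rw [hc1, ← Real.enorm_eq_ofReal (by positivity)]
      simp only [enorm_eq_nnnorm]
    rw [step1]
    refine mul_le_mul_right ?_ c1
    rw [intervalIntegral.integral_of_le hax.le]
    refine le_trans (enorm_integral_le_lintegral_enorm _) ?_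
    have congr1 : ∫⁻ y in Set.Ioc a x, (‖v y * (x - y) ^ (α - 1)‖₊ : ℝ≥0∞) ∂volume
        = ∫⁻ y in Set.Ioc a x, k (x - y) * N (v y) ∂volume := by
      refine setLIntegral_congr_fun measurableSet_Ioc (
        fun y hy => ?_)
      rcases eq_or_lt_of_le hy.2 with h | h
      · subst h
        simp [hk, Real.zero_rpow hα1']
      · rw [nnnorm_mul, ENNReal.coe_mul, mul_comm, hk]
        simp only [sub_pos.2 h, if_pos]
        rw [← enorm_eq_nnnorm ((x - y) ^ (α - 1)), Real.enorm_eq_ofReal (Real.rpow_nonneg (by linarith) _)]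
    simp only [enorm_eq_nnnorm]
    rw [congr1]
    have congr2 : ∫⁻ y in Set.Ioc a x, k (x - y) * N (v y) ∂volume
        = ∫⁻ y in Set.Ioc a x, k (x - y) * N (v' y) ∂volume := by
      refine lintegral_congr_ae ?_
      have hae : v =ᵐ[volume.restrict (Set.Ioc a x)] v' :=
        hvv'.filter_mono (ae_mono (Measure.restrict_mono hIoc_sub le_rfl))
      filter_upwards [hae] with y hy
      rw [hy]
    rw [congr2]
    exact lintegral_mono_set hIoc_sub
  -- Hölder pointwise
  have hold : ∀ x ∈ Set.Icc a b, (∫⁻ y in I, k (x - y) * N (v' y) ∂volume) ^ p ≤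
      Kc ^ (p - 1) * ∫⁻ y in I, k (x - y) * N (v' y) ^ p ∂volume := by
    intro x hx
    rcases eq_or_lt_of_le hp with hp1 | hp1
    · rw [← hp1]
      simp only [ENNReal.rpow_one, sub_self, ENNReal.rpow_zero, one_mul]
      exact le_rfl
    · have hP1 : p ≠ 0 := hp0.ne'
      have hP2 : p - 1 ≠ 0 := by intro h; rw [sub_eq_zero] at h; linarith
      have hq : Real.HolderConjugate (p / (p - 1)) p := by
        rw [Real.holderConjugate_iff]
        constructor
        · rw [lt_div_iff₀ (by linarith)]; linarith
        · field_simp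
          ring
      have hfm : AEMeasurable (fun y => (k (x - y)) ^ (1 - 1/p)) (volume.restrict I) := by
        fun_prop
      have hgm : AEMeasurable (fun y => (k (x - y)) ^ (1/p) * N (v' y)) (volume.restrict I) := by
        have : Measurable (fun y => (k (x - y)) ^ (1/p) * (‖v' y‖₊ : ℝ≥0∞)) := by fun_prop
        exact this.aemeasurable
      have key := ENNReal.lintegral_mul_le_Lp_mul_Lq (volume.restrict I) hq hfm hgm
      have eq1 : ∀ y : ℝ, (k (x - y)) ^ (1 - 1/p) * ((k (x - y)) ^ (1/p) * N (v' y))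
          = k (x - y) * N (v' y) := by
        intro y
        rw [← mul_assoc, ← ENNReal.rpow_add_of_nonneg _ _ (by
          rw [sub_nonneg]; exact div_le_one_of_le₀ hp (by linarith)) (by positivity)]
        rw [show (1 - 1/p) + 1/p = 1 by ring, ENNReal.rpow_one]
      have eq2 : ∀ y : ℝ, ((k (x - y)) ^ (1 - 1/p)) ^ (p / (p - 1)) = k (x - y) := by
        intro y
        rw [← ENNReal.rpow_mul]
        rw [show (1 - 1/p) * (p / (p - 1)) = 1 by field_simp, ENNReal.rpow_one]
      have eq3 : ∀ y : ℝ, ((k (x - y)) ^ (1/p) * N (v' y)) ^ p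
          = k (x - y) * N (v' y) ^ p := by
        intro y
        rw [ENNReal.mul_rpow_of_nonneg _ _ hp0.le, ← ENNReal.rpow_mul,
          one_div_mul_cancel hp0.ne', ENNReal.rpow_one]
      simp only [Pi.mul_apply, eq1, eq2, eq3] at key
      calc (∫⁻ y in I, k (x - y) * N (v' y) ∂volume) ^ p
          ≤ ((∫⁻ y in I, k (x - y) ∂volume) ^ (1 / (p / (p - 1))) *
              (∫⁻ y in I, k (x - y) * N (v' y) ^ p ∂volume) ^ (1/p)) ^ p :=
            ENNReal.rpow_le_rpow key hp0.le
        _ = ((∫⁻ y in I, k (x - y) ∂volume) ^ (1 / (p / (p - 1)))) ^ p *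
              ((∫⁻ y in I, k (x - y) * N (v' y) ^ p ∂volume) ^ (1/p)) ^ p :=
            ENNReal.mul_rpow_of_nonneg _ _ hp0.le
        _ = (∫⁻ y in I, k (x - y) ∂volume) ^ (p - 1) *
              ∫⁻ y in I, k (x - y) * N (v' y) ^ p ∂volume := by
            rw [← ENNReal.rpow_mul, ← ENNReal.rpow_mul,
              show (1 / (p / (p - 1))) * p = p - 1 by field_simp,
              show (1/p) * p = 1 by field_simp, ENNReal.rpow_one]
        _ ≤ Kc ^ (p - 1) * ∫⁻ y in I, k (x - y) * N (v' y) ^ p ∂volume := by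
            exact mul_le_mul_left (ENNReal.rpow_le_rpow (kerI x hx) (by linarith)) _
  -- final part
  have Pne0 : (ENNReal.ofReal p) ≠ 0 := by
    simp only [ne_eq, ENNReal.ofReal_eq_zero, not_le]; exact hp0
  have Pnetop : (ENNReal.ofReal p) ≠ ∞ := ENNReal.ofReal_ne_top
  have toRealP : (ENNReal.ofReal p).toReal = p := ENNReal.toReal_ofReal hp0.le
  have hFmeas : Measurable (Function.uncurry fun x y : ℝ => k (x - y) * N (v' y) ^ p) := by
    have : Measurable (Function.uncurry fun x y : ℝ => k (x - y) * ((‖v' y‖₊ : ℝ≥0∞)) ^ p) := by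
      fun_prop
    exact this
  have main : ∫⁻ x in I, (N (leftRLInt α a v x)) ^ p ∂volume
      ≤ (c1 * Kc) ^ p * ∫⁻ y in I, N (v y) ^ p ∂volume := by
    have cne : c1 ^ p * Kc ^ (p - 1) ≠ ∞ :=
      ENNReal.mul_ne_top (ENNReal.rpow_ne_top_of_nonneg hp0.le ENNReal.ofReal_ne_top)
        (ENNReal.rpow_ne_top_of_nonneg (by linarith) hKc_ne_top)
    have hKpow : Kc ^ (p - 1) * Kc = Kc ^ p := by
      have h2 := (ENNReal.rpow_add (p - 1) 1 hKc_ne_zero hKc_ne_top).symm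
      simpa using h2
    calc ∫⁻ x in I, (N (leftRLInt α a v x)) ^ p ∂volume
        ≤ ∫⁻ x in I, (c1 ^ p * Kc ^ (p - 1)) *
            (∫⁻ y in I, k (x - y) * N (v' y) ^ p ∂volume) ∂volume := by
          refine lintegral_mono_ae ?_
          filter_upwards [ae_restrict_mem measurableSet_Ioo] with x hx
          calc (N (leftRLInt α a v x)) ^ p
              ≤ (c1 * ∫⁻ y in I, k (x - y) * N (v' y) ∂volume) ^ p :=
                ENNReal.rpow_le_rpow (ptw x hx) hp0.le
            _ = c1 ^ p * (∫⁻ y in I, k (x - y) * N (v' y) ∂volume) ^ p :=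
                ENNReal.mul_rpow_of_nonneg _ _ hp0.le
            _ ≤ c1 ^ p * (Kc ^ (p - 1) * ∫⁻ y in I, k (x - y) * N (v' y) ^ p ∂volume) :=
                mul_le_mul_right (hold x ⟨hx.1.le, hx.2.le⟩) _
            _ = (c1 ^ p * Kc ^ (p - 1)) * (∫⁻ y in I, k (x - y) * N (v' y) ^ p ∂volume) := by
                rw [mul_assoc]
      _ = (c1 ^ p * Kc ^ (p - 1)) *
            ∫⁻ x in I, ∫⁻ y in I, k (x - y) * N (v' y) ^ p ∂volume ∂volume :=
          lintegral_const_mul' _ _ cne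
      _ = (c1 ^ p * Kc ^ (p - 1)) *
            ∫⁻ y in I, ∫⁻ x in I, k (x - y) * N (v' y) ^ p ∂volume ∂volume := by
          congr 1
          exact lintegral_lintegral_swap hFmeas.aemeasurable
      _ ≤ (c1 ^ p * Kc ^ (p - 1)) * (Kc * ∫⁻ y in I, N (v' y) ^ p ∂volume) := by
          refine mul_le_mul_right ?_ _
          calc ∫⁻ y in I, (∫⁻ x in I, k (x - y) * N (v' y) ^ p ∂volume) ∂volume
              ≤ ∫⁻ y in I, Kc * N (v' y) ^ p ∂volume := by
                refine lintegral_mono_ae ?_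
                filter_upwards [ae_restrict_mem measurableSet_Ioo] with y hy
                have heq : ∫⁻ x in I, k (x - y) * N (v' y) ^ p ∂volume
                    = (∫⁻ x in I, k (x - y) ∂volume) * N (v' y) ^ p :=
                  lintegral_mul_const _ (hk_meas.comp (measurable_id.sub measurable_const))
                rw [heq]
                exact mul_le_mul_left (kerI2 y ⟨hy.1.le, hy.2.le⟩) _
            _ = Kc * ∫⁻ y in I, N (v' y) ^ p ∂volume := lintegral_const_mul' _ _ hKc_ne_top
      _ = (c1 * Kc) ^ p * ∫⁻ y in I, N (v' y) ^ p ∂volume := by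
          rw [ENNReal.mul_rpow_of_nonneg c1 Kc hp0.le, ← hKpow]
          ring
      _ = (c1 * Kc) ^ p * ∫⁻ y in I, N (v y) ^ p ∂volume := by
          congr 1
          refine lintegral_congr_ae ?_
          filter_upwards [hvv'] with y hy
          rw [hy]
  have hnorm : eLpNorm u (ENNReal.ofReal p) (volume.restrict I)
      = (∫⁻ x in I, (N (leftRLInt α a v x)) ^ p ∂volume) ^ (1/p) := by
    simp only [hN]
    rw [eLpNorm_congr_ae hrep, eLpNorm_eq_lintegral_rpow_enorm_toReal Pne0 Pnetop, toRealP]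
    simp only [enorm_eq_nnnorm]
  have hnormv : eLpNorm v (ENNReal.ofReal p) (volume.restrict I)
      = (∫⁻ y in I, (N (v y)) ^ p ∂volume) ^ (1/p) := by
    simp only [hN]
    rw [eLpNorm_eq_lintegral_rpow_enorm_toReal Pne0 Pnetop, toRealP]
    simp only [enorm_eq_nnnorm]
  rw [hnorm, hnormv]
  calc (∫⁻ x in I, (N (leftRLInt α a v x)) ^ p ∂volume) ^ (1/p)
      ≤ ((c1 * Kc) ^ p * ∫⁻ y in I, N (v y) ^ p ∂volume) ^ (1/p) :=
        ENNReal.rpow_le_rpow main (by positivity)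
    _ = (c1 * Kc) * (∫⁻ y in I, N (v y) ^ p ∂volume) ^ (1/p) := by
        rw [ENNReal.mul_rpow_of_nonneg _ _ (by positivity), ← ENNReal.rpow_mul,
          mul_one_div_cancel hp0.ne', ENNReal.rpow_one]
    _ = ENNReal.ofReal ((b - a) ^ α / Real.Gamma (α + 1)) *
          (∫⁻ y in I, N (v y) ^ p ∂volume) ^ (1/p) := by
        congr 1
        rw [hc1, hKcdef, ← ENNReal.ofReal_mul (one_div_nonneg.2 hΓ.le)]
        congr 1
        rw [hCdef, Real.Gamma_add_one hα.ne']
        have h1 : Real.Gamma α ≠ 0 := hΓ.ne'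
        have h2 : α ≠ 0 := hα.ne'
        field_simp
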